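/- Let A be a symmetric p×p real matrix, G a symmetric q×q real matrix, and C a p×q real matrix with A*C = C*G, C*Cᵀ = 1 + R_A and Cᵀ*C = 1 + R_D for matrices R_A, R_D. Then a scalar λ is an eigenvalue of A possessing a nonzero eigenvector fixed by R_A if and only if λ is an eigenvalue of G possessing a nonzero eigenvector fixed by R_D; that is, exactly the eigenvalues with even eigenvectors are common to A and G. -/
import Mathlib


open Matrix

lemma even_eig_aux {p q : ℕ}
    (A : Matrix (Fin p) (Fin p) ℝ) (G : Matrix (Fin q) (Fin q) ℝ)
    (C : Matrix (Fin p) (Fin q) ℝ)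
    (RA : Matrix (Fin p) (Fin p) ℝ) (RD : Matrix (Fin q) (Fin q) ℝ)
    (hAC : G * Cᵀ = Cᵀ * A)
    (h1 : C * Cᵀ = 1 + RA) (h2 : Cᵀ * C = 1 + RD)
    (lam : ℝ) (v : Fin p → ℝ) (hv : v ≠ 0)
    (hev : A.mulVec v = lam • v) (hR : RA.mulVec v = v) :
    ∃ w : Fin q → ℝ, w ≠ 0 ∧ G.mulVec w = lam • w ∧ RD.mulVec w = w := by
  set w := Cᵀ.mulVec v with hw
  have hCw : C.mulVec w = (2 : ℝ) • v := by
    rw [hw, mulVec_mulVec, h1, add_mulVec, one_mulVec, hR, two_smul]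
  refine ⟨w, ?_, ?_, ?_⟩
  · intro h0
    apply hv
    have : C.mulVec 0 = (2 : ℝ) • v := by rw [← h0]; exact hCw
    simpa [mulVec_zero, eq_comm, smul_eq_zero] using this
  · rw [hw, mulVec_mulVec, hAC, ← mulVec_mulVec, hev, mulVec_smul]
  · have hCC : (Cᵀ * C).mulVec w = (2 : ℝ) • w := by
      rw [← mulVec_mulVec, hCw, mulVec_smul, hw]
    rw [h2, add_mulVec, one_mulVec, two_smul] at hCC
    exact add_left_cancel hCC

theorem even_eigenvalues_common {p q : ℕ}
    (A : Matrix (Fin p) (Fin p) ℝ) (G : Matrix (Fin q) (Fin q) ℝ)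
    (C : Matrix (Fin p) (Fin q) ℝ)
    (RA : Matrix (Fin p) (Fin p) ℝ) (RD : Matrix (Fin q) (Fin q) ℝ)
    (hA : Aᵀ = A) (hG : Gᵀ = G)
    (h : A * C = C * G)
    (h1 : C * Cᵀ = 1 + RA) (h2 : Cᵀ * C = 1 + RD)
    (lam : ℝ) :
    (∃ v : Fin p → ℝ, v ≠ 0 ∧ A.mulVec v = lam • v ∧ RA.mulVec v = v) ↔
      (∃ w : Fin q → ℝ, w ≠ 0 ∧ G.mulVec w = lam • w ∧ RD.mulVec w = w) := by
  have hT : G * Cᵀ = Cᵀ * A := by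
    have := congrArg Matrix.transpose h
    rw [transpose_mul, transpose_mul, hA, hG] at this
    exact this.symm
  have hT' : A * (Cᵀ)ᵀ = (Cᵀ)ᵀ * G := by simpa using h
  constructor
  · rintro ⟨v, hv, hev, hR⟩
    exact even_eig_aux A G C RA RD hT h1 h2 lam v hv hev hR
  · rintro ⟨w, hw, hev, hR⟩
    refine even_eig_aux G A Cᵀ RD RA ?_ h2 (by simpa using h1) lam w hw hev hR
    simpa using hT'
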